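/- Let M be an abelian group and suppose f : [0,∞) → M admits two polynomial expansions f(a) = f_0 + f_1(a) + f_2(a²) + ⋯ + f_d(a^d) and f(a) = g_0 + g_1(a) + ⋯ + g_{d}(a^{d}), where f_0, g_0 ∈ M are constants and each f_i, g_i : [0,∞) → M is an additive homomorphism. Then f_0 = g_0 and f_i = g_i for all i = 1, …, d. -/

import Mathlib

open scoped NNReal

private lemma myAddHom_zero {M : Type*} [AddCommGroup M] {h : ℝ≥0 → M}
    (hadd : ∀ a b : ℝ≥0, h (a + b) = h a + h b) : h 0 = 0 := by
  have := hadd 0 0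
  simp only [add_zero] at this
  exact (left_eq_add.mp this)

private lemma myAddHom_nsmul {M : Type*} [AddCommGroup M] {h : ℝ≥0 → M}
    (hadd : ∀ a b : ℝ≥0, h (a + b) = h a + h b) :
    ∀ (n : ℕ) (x : ℝ≥0), h ((n : ℝ≥0) * x) = n • h x := by
  intro n x
  induction n with
  | zero => simpa using myAddHom_zero hadd
  | succ n ihn =>
    have : ((n + 1 : ℕ) : ℝ≥0) * x = (n : ℝ≥0) * x + x := by push_cast; ring
    rw [this, hadd, ihn, succ_nsmul]

private lemma myKey {M : Type*} [AddCommGroup M] :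
    ∀ (d : ℕ) (h : ℕ → ℝ≥0 → M),
      (∀ i ∈ Finset.Icc 1 d, ∀ a b : ℝ≥0, h i (a + b) = h i a + h i b) →
      (∀ a : ℝ≥0, ∑ i ∈ Finset.Icc 1 d, h i (a ^ i) = 0) →
      ∀ i ∈ Finset.Icc 1 d, ∀ a, h i a = 0 := by
  intro d
  induction d with
  | zero => simp
  | succ d ih =>
    intro h hadd hsum
    -- lower-degree coefficients vanish
    have hIcc : ∀ i ∈ Finset.Icc 1 d, i ∈ Finset.Icc 1 (d+1) := by
      intro i hi
      simp only [Finset.mem_Icc] at hi ⊢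
      omega
    have hpow : ∀ i ∈ Finset.Icc 1 (d+1), ∀ a : ℝ≥0,
        h i ((2 * a) ^ i) = (2 ^ i : ℕ) • h i (a ^ i) := by
      intro i hi a
      have : (2 * a) ^ i = ((2 ^ i : ℕ) : ℝ≥0) * a ^ i := by
        push_cast; ring
      rw [this, myAddHom_nsmul (hadd i hi)]
    have hcomb : ∀ a : ℝ≥0,
        ∑ i ∈ Finset.Icc 1 (d+1), ((2:ℤ) ^ (d+1) - 2 ^ i) • h i (a ^ i) = 0 := by
      intro a
      have h1 := hsum (2 * a)
      have h2 := hsum a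
      calc ∑ i ∈ Finset.Icc 1 (d+1), ((2:ℤ) ^ (d+1) - 2 ^ i) • h i (a ^ i)
          = ∑ i ∈ Finset.Icc 1 (d+1),
            ((2:ℤ) ^ (d+1) • h i (a ^ i) - h i ((2*a) ^ i)) := by
            refine Finset.sum_congr rfl fun i hi => ?_
            rw [hpow i hi a, sub_smul]
            norm_cast
        _ = (2:ℤ) ^ (d+1) • ∑ i ∈ Finset.Icc 1 (d+1), h i (a ^ i)
            - ∑ i ∈ Finset.Icc 1 (d+1), h i ((2*a) ^ i) := by
            rw [Finset.sum_sub_distrib, Finset.smul_sum]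
        _ = 0 := by rw [h1, h2, smul_zero, sub_zero]
    have hlowz := ih (fun i a => ((2:ℤ) ^ (d+1) - 2 ^ i) • h i a)
      (by
        intro i hi a b
        beta_reduce
        rw [hadd i (hIcc i hi), smul_add])
      (by
        intro a
        have := hcomb a
        rw [Finset.sum_Icc_succ_top (by omega : 1 ≤ d + 1)] at this
        simpa using this)
    have hlow : ∀ i ∈ Finset.Icc 1 d, ∀ a, h i a = 0 := by
      intro i hi a
      have hle : 2 ^ i ≤ 2 ^ (d+1) :=
        Nat.pow_le_pow_right (by norm_num) (by simp only [Finset.mem_Icc] at hi; omega)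
      set c : ℕ := 2 ^ (d+1) - 2 ^ i with hc
      have hcpos : 0 < c := by
        have : 2 ^ i < 2 ^ (d+1) :=
          Nat.pow_lt_pow_right (by norm_num) (by simp only [Finset.mem_Icc] at hi; omega)
        omega
      have hzc : ((2:ℤ) ^ (d+1) - 2 ^ i) = (c : ℤ) := by
        push_cast [hc, Nat.cast_sub hle]; ring
      have ha : a = (c : ℝ≥0) * (a / c) := by
        rw [mul_div_cancel₀]
        exact_mod_cast hcpos.ne'
      rw [ha, myAddHom_nsmul (hadd i (hIcc i hi))]
      have := hlowz i hi (a / c)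
      simp only [hzc, natCast_zsmul] at this
      exact this
    intro i hi a
    rcases Finset.mem_Icc.mp hi with ⟨h1i, h2i⟩
    rcases Nat.lt_or_ge i (d+1) with hlt | hge
    · exact hlow i (Finset.mem_Icc.mpr ⟨h1i, by omega⟩) a
    · have hieq : i = d + 1 := by omega
      subst hieq
      -- top coefficient vanishes
      have htop : ∀ b : ℝ≥0, h (d+1) (b ^ (d+1)) = 0 := by
        intro b
        have := hsum b
        rw [Finset.sum_Icc_succ_top (by omega : 1 ≤ d + 1)] at this
        have hz : ∑ j ∈ Finset.Icc 1 d, h j (b ^ j) = 0 :=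
          Finset.sum_eq_zero fun j hj => hlow j hj _
        rw [hz, zero_add] at this
        exact this
      have hroot : (a ^ (((d:ℝ)+1)⁻¹)) ^ (d+1) = a := by
        rw [← NNReal.rpow_natCast (a ^ (((d:ℝ)+1)⁻¹)) (d+1), ← NNReal.rpow_mul]
        push_cast
        rw [inv_mul_cancel₀ (by positivity : ((d:ℝ)+1) ≠ 0), NNReal.rpow_one]
      calc h (d+1) a = h (d+1) ((a ^ (((d:ℝ)+1)⁻¹)) ^ (d+1)) := by rw [hroot]
        _ = 0 := htop _

theorem stmt9 {M : Type*} [AddCommGroup M] {d : ℕ}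
    (f : ℝ≥0 → M) (f0 g0 : M) (F G : ℕ → ℝ≥0 → M)
    (hFadd : ∀ i ∈ Finset.Icc 1 d, ∀ a b : ℝ≥0, F i (a + b) = F i a + F i b)
    (hGadd : ∀ i ∈ Finset.Icc 1 d, ∀ a b : ℝ≥0, G i (a + b) = G i a + G i b)
    (hF : ∀ a : ℝ≥0, f a = f0 + ∑ i ∈ Finset.Icc 1 d, F i (a ^ i))
    (hG : ∀ a : ℝ≥0, f a = g0 + ∑ i ∈ Finset.Icc 1 d, G i (a ^ i)) :
    f0 = g0 ∧ ∀ i ∈ Finset.Icc 1 d, F i = G i := by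
  have hFG : ∀ a : ℝ≥0,
      f0 + ∑ i ∈ Finset.Icc 1 d, F i (a ^ i)
        = g0 + ∑ i ∈ Finset.Icc 1 d, G i (a ^ i) := by
    intro a; rw [← hF, ← hG]
  have h0 : f0 = g0 := by
    have := hFG 0
    have hFz : ∑ i ∈ Finset.Icc 1 d, F i ((0:ℝ≥0) ^ i) = 0 :=
      Finset.sum_eq_zero fun i hi => by
        rw [zero_pow (by simp only [Finset.mem_Icc] at hi; omega)]
        exact myAddHom_zero (hFadd i hi)
    have hGz : ∑ i ∈ Finset.Icc 1 d, G i ((0:ℝ≥0) ^ i) = 0 :=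
      Finset.sum_eq_zero fun i hi => by
        rw [zero_pow (by simp only [Finset.mem_Icc] at hi; omega)]
        exact myAddHom_zero (hGadd i hi)
    rw [hFz, hGz, add_zero, add_zero] at this
    exact this
  refine ⟨h0, ?_⟩
  have hkey := myKey d (fun i a => F i a - G i a)
    (by
      intro i hi a b
      beta_reduce
      rw [hFadd i hi, hGadd i hi]
      abel)
    (by
      intro a
      have := hFG a
      rw [h0] at this
      have h2 := add_left_cancel this
      simp only [Finset.sum_sub_distrib, h2, sub_self])
  intro i hi
  funext a
  have := hkey i hi a
  simpa [sub_eq_zero] using this
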